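/- Let e_1, …, e_{2mn} be a Majorana family of 2mn operators on ℂ^{2^{mn}} (n ≥ 2). For 1 ≤ k ≠ l ≤ n define Γ^{k,l} = Σ_{j=1}^{2m} (−1)^{m−j} · e_{2m(k−1)+j} · e_{2m(l−1)+1}⋯e_{2m(l−1)+j−1}·e_{2m(l−1)+j+1}⋯e_{2ml}, and let C = i^{mn} e_1⋯e_{2mn}. If a matrix ρ satisfies Γ^{k,l} ρ = 0 for all k ≠ l, then the matrix ρ̃ = (1/2)(ρ + C ρ C) satisfies Γ^{k,l} ρ̃ = 0 for all k ≠ l, and ρ̃ is even, i.e., it lies in the complex span of the identity and the products of an even number of distinct operators e_j. -/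

import Mathlib

open Matrix Kronecker Finset
open scoped ComplexOrder

noncomputable section

/-- A Majorana family: `2*m` Hermitian `2^m × 2^m` complex matrices squaring to the
identity and pairwise anticommuting. -/
structure MajoranaFamily (m : ℕ) where
  c : Fin (2*m) → Matrix (Fin (2^m)) (Fin (2^m)) ℂ
  herm : ∀ j, (c j).IsHermitian
  sq : ∀ j, c j * c j = 1
  anticomm : ∀ j k, j ≠ k → c j * c k = -(c k * c j)

abbrev Mat (m : ℕ) := Matrix (Fin (2^m)) (Fin (2^m)) ℂ
abbrev Mat2 (m : ℕ) := Matrix (Fin (2^m) × Fin (2^m)) (Fin (2^m) × Fin (2^m)) ℂ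
abbrev MatN (m n : ℕ) := Matrix (Fin n → Fin (2^m)) (Fin n → Fin (2^m)) ℂ

variable {m : ℕ}

/-- A state: a positive semidefinite matrix of trace `1`. -/
def IsState {ι : Type*} [Fintype ι] (ρ : Matrix ι ι ℂ) : Prop :=
  ρ.PosSemidef ∧ ρ.trace = 1

/-- The trace norm `‖X‖₁ = Tr √(XᴴX)`. -/
def traceNorm {ι : Type*} [Fintype ι] [DecidableEq ι] (X : Matrix ι ι ℂ) : ℝ :=
  (((Matrix.posSemidef_conjTranspose_mul_self X).1.eigenvectorUnitary.1 *
    diagonal (fun i => ((Real.sqrt ((Matrix.posSemidef_conjTranspose_mul_self X).1.eigenvalues i) : ℝ) : ℂ)) *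
    (star (Matrix.posSemidef_conjTranspose_mul_self X).1.eigenvectorUnitary : Matrix ι ι ℂ)).trace).re

/-- The rotated Majorana operators `c̃_j = Σ_i R_{ij} c_i`. -/
def tilde (F : MajoranaFamily m) (R : Matrix (Fin (2*m)) (Fin (2*m)) ℝ)
    (j : Fin (2*m)) : Mat m :=
  ∑ i, (R i j : ℂ) • F.c i

/-- Standard-form Gaussian state `2^{-m} ∏_{k=1}^m (I + i λ_k c̃_{2k-1} c̃_{2k})`
(ordered product; the factors commute). -/
def gaussStd (F : MajoranaFamily m) (R : Matrix (Fin (2*m)) (Fin (2*m)) ℝ)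
    (lam : Fin m → ℝ) : Mat m :=
  ((2:ℂ)^m)⁻¹ • (List.ofFn (fun k : Fin m =>
    (1 : Mat m) + (Complex.I * (lam k : ℂ)) •
      (tilde F R ⟨2*k.val, by omega⟩ * tilde F R ⟨2*k.val+1, by omega⟩))).prod

/-- A pure Gaussian state: a standard-form Gaussian state with all `λ_k ∈ {-1,1}`,
for some `R ∈ SO(2m,ℝ)`. -/
def IsPureGaussian (F : MajoranaFamily m) (ρ : Mat m) : Prop :=
  ∃ (R : Matrix (Fin (2*m)) (Fin (2*m)) ℝ) (lam : Fin m → ℝ),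
    Rᵀ * R = 1 ∧ R.det = 1 ∧ (∀ k, lam k = 1 ∨ lam k = -1) ∧ ρ = gaussStd F R lam

/-- A convex-Gaussian state: a finite convex combination of pure Gaussian states. -/
def IsConvexGaussian (F : MajoranaFamily m) (ρ : Mat m) : Prop :=
  ∃ (k : ℕ) (p : Fin k → ℝ) (g : Fin k → Mat m),
    (∀ i, 0 ≤ p i) ∧ (∑ i, p i) = 1 ∧ (∀ i, IsPureGaussian F (g i)) ∧
    ρ = ∑ i, p i • g i

/-- `Λ = Σ_j c_j ⊗ c_j` on `ℂ^N ⊗ ℂ^N`. -/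
def Lambda (F : MajoranaFamily m) : Mat2 m := ∑ j, F.c j ⊗ₖ F.c j

/-- Ordered product `c_{a_1} ⋯ c_{a_r}` over a finite set `S = {a_1 < … < a_r}`. -/
def majProd (F : MajoranaFamily m) (S : Finset (Fin (2*m))) : Mat m :=
  ((S.sort (· ≤ ·)).map F.c).prod

/-- An even operator: a complex linear combination of the identity and products of
an even number of distinct Majorana operators. -/
def IsEven (F : MajoranaFamily m) (X : Mat m) : Prop :=
  X ∈ Submodule.span ℂ {Y : Mat m | ∃ S : Finset (Fin (2*m)), Even S.card ∧ Y = majProd F S}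

/-- The Hermitian correlator `i^k c_{a_1} ⋯ c_{a_{2k}}` associated to a set of
cardinality `2k`. -/
def corrOp (F : MajoranaFamily m) (S : Finset (Fin (2*m))) : Mat m :=
  (Complex.I ^ (S.card / 2)) • majProd F S

/-- The operator acting as `A` on the `k`-th tensor factor of `(ℂ^N)^{⊗n}` and as the
identity on the other factors. -/
def embedAt (n : ℕ) (k : Fin n) (A : Mat m) : MatN m n :=
  fun x y => A (x k) (y k) * ∏ l ∈ Finset.univ.erase k, (if x l = y l then 1 else 0)

/-- `Λ^{k,l} = Σ_j c_j^{(k)} c_j^{(l)}` on `(ℂ^N)^{⊗n}`. -/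
def LambdaKL (F : MajoranaFamily m) (n : ℕ) (k l : Fin n) : MatN m n :=
  ∑ j, embedAt n k (F.c j) * embedAt n l (F.c j)

/-- Partial trace of an operator on `(ℂ^N)^{⊗n}` over the tensor factors `2, …, n`. -/
def ptrRest (n : ℕ) (hn : 1 ≤ n) (ρ : MatN m n) : Mat m := fun a b =>
  ∑ g : Fin (n-1) → Fin (2^m),
    ρ (fun i => if h : i.val = 0 then a else g ⟨i.val - 1, by omega⟩)
      (fun i => if h : i.val = 0 then b else g ⟨i.val - 1, by omega⟩)

/-- `ρ` has an `n`-Gaussian-symmetric extension. -/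
def HasGSExt (F : MajoranaFamily m) (n : ℕ) (hn : 1 ≤ n) (ρ : Mat m) : Prop :=
  ∃ ext : MatN m n, IsState ext ∧ ptrRest n hn ext = ρ ∧
    ∀ k l : Fin n, k ≠ l → LambdaKL F n k l * ext = 0

/-- `‖Λ‖₁ = 2(m+1) C(2m, m+1)`. -/
def lambdaNorm (m : ℕ) : ℝ := 2*(m+1) * (Nat.choose (2*m) (m+1) : ℝ)

/-- `ε(n) = min {2, 10 ‖Λ‖₁² 2^{2m} n^{-1/3}}`. -/
def epsB (m n : ℕ) : ℝ :=
  min 2 (10 * lambdaNorm m ^ 2 * 2^(2*m) / (n:ℝ) ^ ((1:ℝ)/3))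

/-- `χ(n) = (ε(n)/2) (2m)!/m!`. -/
def chiB (m n : ℕ) : ℝ :=
  epsB m n / 2 * ((Nat.factorial (2*m) : ℝ) / (Nat.factorial m : ℝ))

/-- `δ(n) = χ(n)/(1+χ(n))`. -/
def deltaB (m n : ℕ) : ℝ := chiB m n / (1 + chiB m n)

/-- The parity operator `P = i^m c_1 ⋯ c_{2m}`. -/
def parityOp (F : MajoranaFamily m) : Mat m :=
  (Complex.I ^ m) • (((List.finRange (2*m)).map F.c).prod)

/-- The operator `I^{⊗ r} ⊗ c_s ⊗ P^{⊗(n-r-1)}` on `(ℂ^N)^{⊗n}` (0-based position `r`). -/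
def dOp (F : MajoranaFamily m) (n : ℕ) (r : Fin n) (s : Fin (2*m)) : MatN m n :=
  fun x y => ∏ l : Fin n,
    if l < r then (if x l = y l then 1 else 0)
    else if l = r then F.c s (x l) (y l)
    else parityOp F (x l) (y l)

/-- The family `d_1, …, d_{2mn}`, where `d_{2m(r-1)+s} = I^{⊗(r-1)} ⊗ c_s ⊗ P^{⊗(n-r)}`. -/
def dAll (hm : 1 ≤ m) (F : MajoranaFamily m) (n : ℕ) (j : Fin (2*(m*n))) : MatN m n :=
  dOp F n
    ⟨j.val / (2*m), by
      have h1 := j.isLt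
      rw [Nat.div_lt_iff_lt_mul (by omega)]
      have h2 : n * (2*m) = 2*(m*n) := by ring
      omega⟩
    ⟨j.val % (2*m), Nat.mod_lt _ (by omega)⟩

/-- The index `2m(k-1)+j` (0-based: `2mk + j`) into a family of `2mn` Majorana operators. -/
def bigIdx (m n : ℕ) (k : Fin n) (j : Fin (2*m)) : Fin (2*(m*n)) :=
  ⟨2*m*k.val + j.val, by
    have hk : k.val + 1 ≤ n := k.isLt
    have hj := j.isLt
    have h1 : 2*m*(k.val+1) = 2*m*k.val + 2*m := by ring
    have h2 : 2*m*(k.val+1) ≤ 2*m*n := Nat.mul_le_mul le_rfl hk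
    have h3 : 2*m*n = 2*(m*n) := by ring
    omega⟩

/-- `Γ^{k,l} = Σ_{j=1}^{2m} (-1)^{m-j} e_{2m(k-1)+j} · e_{2m(l-1)+1} ⋯ ê_{2m(l-1)+j} ⋯ e_{2ml}`. -/
def GammaKL (m n : ℕ) (E : MajoranaFamily (m*n)) (k l : Fin n) :
    Matrix (Fin (2^(m*n))) (Fin (2^(m*n))) ℂ :=
  ∑ j : Fin (2*m), ((-1:ℂ) ^ ((m:ℤ) - (j.val+1 : ℤ))) •
    (E.c (bigIdx m n k j) *
      (((List.finRange (2*m)).filter (fun i => i ≠ j)).map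
        (fun i => E.c (bigIdx m n l i))).prod)

/-- `C = i^{mn} e_1 ⋯ e_{2mn}`. -/
def bigParity (m n : ℕ) (E : MajoranaFamily (m*n)) :
    Matrix (Fin (2^(m*n))) (Fin (2^(m*n))) ℂ :=
  (Complex.I ^ (m*n)) • (((List.finRange (2*(m*n))).map E.c).prod)

/-- The `n`-fold tensor power `A^{⊗n}` of a matrix on `ℂ^N`. -/
def tpow (n : ℕ) (A : Mat m) : MatN m n := fun x y => ∏ k, A (x k) (y k)



/-! ### Auxiliary development for `stmt_18` -/

section AuxStmt18

open scoped symmDiff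

variable {q : ℕ} (F : MajoranaFamily q)

/-- Product of Majorana operators over a list of indices. -/
def pC (L : List (Fin (2*q))) : Mat q := (L.map F.c).prod

lemma pC_nil : pC F [] = 1 := rfl

lemma pC_cons (a : Fin (2*q)) (L : List (Fin (2*q))) :
    pC F (a :: L) = F.c a * pC F L := by simp [pC]

lemma majProd_eq_pC (S : Finset (Fin (2*q))) :
    majProd F S = pC F (S.sort (· ≤ ·)) := rfl

/-- Anticommutation of a single generator through a list product. -/
lemma pC_ac (j : Fin (2*q)) (L : List (Fin (2*q))) :
    F.c j * pC F L = ((-1:ℂ)^((L.filter (· ≠ j)).length)) • (pC F L * F.c j) := by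
  induction L with
  | nil => simp [pC_nil]
  | cons a t ih =>
    by_cases h : a = j
    · subst h
      have hf : ((a::t).filter (· ≠ a)) = t.filter (· ≠ a) := by simp
      calc F.c a * pC F (a :: t) = F.c a * (F.c a * pC F t) := by rw [pC_cons]
      _ = F.c a * (((-1:ℂ)^((t.filter (· ≠ a)).length)) • (pC F t * F.c a)) := by rw [ih]
      _ = ((-1:ℂ)^((t.filter (· ≠ a)).length)) • (F.c a * pC F t * F.c a) := by
            rw [mul_smul_comm, mul_assoc]
      _ = ((-1:ℂ)^(((a::t).filter (· ≠ a)).length)) • (pC F (a::t) * F.c a) := by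
            rw [hf, pC_cons]
    · have hf : ((a::t).filter (· ≠ j)) = a :: t.filter (· ≠ j) := by simp [h]
      calc F.c j * pC F (a :: t) = (F.c j * F.c a) * pC F t := by rw [pC_cons, mul_assoc]
      _ = -((F.c a * F.c j) * pC F t) := by
            rw [F.anticomm j a (fun hja => h hja.symm), neg_mul]
      _ = -(F.c a * (F.c j * pC F t)) := by rw [mul_assoc]
      _ = -(F.c a * (((-1:ℂ)^((t.filter (· ≠ j)).length)) • (pC F t * F.c j))) := by rw [ih]
      _ = ((-1:ℂ)^((t.filter (· ≠ j)).length + 1)) • ((F.c a * pC F t) * F.c j) := by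
            rw [mul_smul_comm, ← neg_smul, mul_assoc]
            congr 1
            rw [pow_succ]; ring
      _ = ((-1:ℂ)^(((a::t).filter (· ≠ j)).length)) • (pC F (a::t) * F.c j) := by
            rw [hf, List.length_cons, pC_cons]

lemma filter_ne_length {α : Type*} [DecidableEq α] (j : α) :
    ∀ (l : List α), l.Nodup →
      (l.filter (· ≠ j)).length = if j ∈ l then l.length - 1 else l.length
  | [], _ => by simp
  | a :: t, hl => by
    rw [List.nodup_cons] at hl
    have iht := filter_ne_length j t hl.2
    by_cases h : a = j
    · subst h
      rw [if_neg hl.1] at iht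
      have hfc : (a :: t).filter (· ≠ a) = t.filter (· ≠ a) := by simp
      rw [hfc, iht, if_pos List.mem_cons_self, List.length_cons,
        Nat.add_sub_cancel]
    · have hfc : (a :: t).filter (· ≠ j) = a :: t.filter (· ≠ j) := by simp [h]
      rw [hfc, List.length_cons, iht, List.length_cons]
      by_cases h2 : j ∈ t
      · rw [if_pos h2, if_pos (List.mem_cons.mpr (Or.inr h2))]
        have : t.length ≠ 0 := by
          rintro h0; rw [List.length_eq_zero_iff] at h0; subst h0; simp at h2
        omega
      · rw [if_neg h2, if_neg (fun hmem => by
          rcases List.mem_cons.mp hmem with h' | h'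
          exacts [h h'.symm, h2 h'])]

lemma pC_mul_self : ∀ (L : List (Fin (2*q))), L.Nodup →
    pC F L * pC F L = ((-1:ℂ)^(L.length * (L.length - 1) / 2)) • 1
  | [], _ => by simp [pC_nil]
  | a :: t, hL => by
    rw [List.nodup_cons] at hL
    have ih := pC_mul_self t hL.2
    have hfl : ((t.filter (· ≠ a)).length) = t.length := by
      rw [filter_ne_length a t hL.2, if_neg hL.1]
    have key := pC_ac F a t
    rw [hfl] at key
    have key2 : pC F t * F.c a = ((-1:ℂ)^t.length) • (F.c a * pC F t) := by
      rw [key, smul_smul, ← mul_pow, neg_mul_neg, one_mul, one_pow, one_smul]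
    have harith : t.length + t.length * (t.length - 1) / 2
        = (a :: t).length * ((a :: t).length - 1) / 2 := by
      simp only [List.length_cons, Nat.add_sub_cancel]
      have h1 : (t.length + 1) * t.length = t.length * (t.length - 1) + 2 * t.length := by
        cases t with
        | nil => simp
        | cons b u => simp only [List.length_cons, Nat.add_sub_cancel]; ring
      have h2 : 2 ∣ t.length * (t.length - 1) := by
        cases t with
        | nil => simp
        | cons b u =>
          simp only [List.length_cons, Nat.add_sub_cancel]
          rcases Nat.even_or_odd u.length with h | h
          · exact Dvd.dvd.mul_left h.two_dvd _
          · exact Dvd.dvd.mul_right (h.add_one).two_dvd _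
      omega
    calc pC F (a::t) * pC F (a::t)
        = F.c a * ((pC F t * F.c a) * pC F t) := by
          rw [pC_cons, mul_assoc, ← mul_assoc (pC F t)]
      _ = F.c a * ((((-1:ℂ)^t.length) • (F.c a * pC F t)) * pC F t) := by rw [key2]
      _ = ((-1:ℂ)^t.length) • (F.c a * (F.c a * (pC F t * pC F t))) := by
          rw [smul_mul_assoc, mul_smul_comm, mul_assoc (F.c a) (pC F t)]
      _ = ((-1:ℂ)^t.length) • (pC F t * pC F t) := by
          rw [← mul_assoc (F.c a), F.sq, one_mul]
      _ = ((-1:ℂ)^t.length) • (((-1:ℂ)^(t.length * (t.length - 1) / 2)) • 1) := by rw [ih]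
      _ = ((-1:ℂ)^((a :: t).length * ((a :: t).length - 1) / 2)) • 1 := by
          rw [smul_smul, ← pow_add, harith]

lemma symmDiff_singleton_not_mem {α : Type*} [DecidableEq α] {j : α} {S : Finset α}
    (h : j ∉ S) : ({j} : Finset α) ∆ S = insert j S := by
  ext x
  by_cases hx : x = j <;> simp [Finset.mem_symmDiff, hx, h] <;> tauto

lemma symmDiff_singleton_mem {α : Type*} [DecidableEq α] {j : α} {S : Finset α}
    (h : j ∈ S) : ({j} : Finset α) ∆ S = S.erase j := by
  ext x
  by_cases hx : x = j <;> simp [Finset.mem_symmDiff, hx, h]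

lemma insert_symmDiff_singleton {α : Type*} [DecidableEq α] {a j : α} (h : a ≠ j)
    {S : Finset α} (ha : a ∉ S) :
    insert a (({j} : Finset α) ∆ S) = ({j} : Finset α) ∆ insert a S := by
  ext x
  by_cases h1 : x = a <;> by_cases h2 : x = j <;>
    simp [Finset.mem_symmDiff, h1, h2, h, Ne.symm h, ha] <;> tauto

/-- Multiplying a sorted product by one generator on the left. -/
lemma pC_step (j : Fin (2*q)) :
    ∀ (l : List (Fin (2*q))), l.Pairwise (· < ·) →
    ∃ (ε : ℂ) (l' : List (Fin (2*q))), (ε = 1 ∨ ε = -1) ∧ l'.Pairwise (· < ·) ∧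
      l'.toFinset = {j} ∆ l.toFinset ∧ F.c j * pC F l = ε • pC F l'
  | [], _ => ⟨1, [j], Or.inl rfl, by simp, by
      ext x; simp [Finset.mem_symmDiff], by simp [pC_nil, pC_cons]⟩
  | a :: t, hs => by
    have hst := List.pairwise_cons.mp hs
    have hat : a ∉ t := fun hmem => absurd (hst.1 a hmem) (lt_irrefl a)
    rcases lt_trichotomy j a with hja | hja | hja
    · refine ⟨1, j :: a :: t, Or.inl rfl, ?_, ?_, by rw [one_smul, pC_cons F j (a :: t)]⟩
      · refine List.pairwise_cons.mpr ⟨fun b hb => ?_, hs⟩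
        rcases List.mem_cons.mp hb with hb | hb
        · subst hb; exact hja
        · exact lt_trans hja (hst.1 b hb)
      · have hj : j ∉ (a::t).toFinset := by
          simp only [List.toFinset_cons, Finset.mem_insert, List.mem_toFinset]
          rintro (h | h)
          · exact absurd hja (by simp [h])
          · exact absurd (hst.1 j h) (lt_asymm hja)
        rw [symmDiff_singleton_not_mem hj]
        simp
    · subst hja
      refine ⟨1, t, Or.inl rfl, hst.2, ?_, ?_⟩
      · rw [List.toFinset_cons, symmDiff_singleton_mem (Finset.mem_insert_self j _),
          Finset.erase_insert (by simpa using hat)]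
      · rw [one_smul, pC_cons, ← mul_assoc, F.sq, one_mul]
    · obtain ⟨ε, t', hε, hs', hfs', hmul⟩ := pC_step j t hst.2
      refine ⟨-ε, a :: t', ?_, ?_, ?_, ?_⟩
      · rcases hε with h | h <;> simp [h]
      · refine List.pairwise_cons.mpr ⟨fun b hb => ?_, hs'⟩
        have : b ∈ t'.toFinset := List.mem_toFinset.mpr hb
        rw [hfs'] at this
        rcases Finset.mem_symmDiff.mp this with ⟨h1, _⟩ | ⟨h1, _⟩
        · rw [Finset.mem_singleton.mp h1]; exact hja
        · exact hst.1 b (List.mem_toFinset.mp h1)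
      · rw [List.toFinset_cons, hfs',
          insert_symmDiff_singleton (fun h => absurd hja (by simp [h]))
            (by simpa using hat), List.toFinset_cons]
      · calc F.c j * pC F (a :: t) = (F.c j * F.c a) * pC F t := by rw [pC_cons, mul_assoc]
        _ = -(F.c a * (F.c j * pC F t)) := by
              rw [F.anticomm j a (fun h => absurd hja (by simp [h])), neg_mul, mul_assoc]
        _ = -(F.c a * (ε • pC F t')) := by rw [hmul]
        _ = (-ε) • pC F (a :: t') := by
              rw [mul_smul_comm, pC_cons, neg_smul]

/-- Product of two sorted Majorana monomials is `±1` times the monomial of the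
symmetric difference. -/
lemma pC_mul : ∀ (l₁ : List (Fin (2*q))), l₁.Pairwise (· < ·) →
    ∀ (l₂ : List (Fin (2*q))), l₂.Pairwise (· < ·) →
    ∃ (ε : ℂ) (l₃ : List (Fin (2*q))), (ε = 1 ∨ ε = -1) ∧ l₃.Pairwise (· < ·) ∧
      l₃.toFinset = l₁.toFinset ∆ l₂.toFinset ∧ pC F l₁ * pC F l₂ = ε • pC F l₃
  | [], _, l₂, h₂ => ⟨1, l₂, Or.inl rfl, h₂,
      by simp [← Finset.bot_eq_empty, bot_symmDiff], by simp [pC_nil]⟩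
  | a :: t, h₁, l₂, h₂ => by
    have hst := List.pairwise_cons.mp h₁
    have hat : a ∉ t := fun hmem => absurd (hst.1 a hmem) (lt_irrefl a)
    obtain ⟨ε, l₃, hε, hs₃, hfs₃, hmul⟩ := pC_mul t hst.2 l₂ h₂
    obtain ⟨ε', l₄, hε', hs₄, hfs₄, hmul'⟩ := pC_step F a l₃ hs₃
    refine ⟨ε * ε', l₄, ?_, hs₄, ?_, ?_⟩
    · rcases hε with h | h <;> rcases hε' with h' | h' <;> simp [h, h']
    · rw [hfs₄, hfs₃, ← symmDiff_assoc]
      congr 1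
      rw [symmDiff_singleton_not_mem (by simpa using hat)]
      simp
    · rw [pC_cons, mul_assoc, hmul, mul_smul_comm, hmul', smul_smul]

lemma trace_eq_zero_of_anticomm (j : Fin (2*q)) (X : Mat q)
    (h : F.c j * X = -(X * F.c j)) : X.trace = 0 := by
  have h1 : X.trace = -X.trace := by
    calc X.trace = (F.c j * (F.c j * X)).trace := by rw [← mul_assoc, F.sq, one_mul]
    _ = ((F.c j * X) * F.c j).trace := Matrix.trace_mul_comm _ _
    _ = (-(X * F.c j) * F.c j).trace := by rw [h]
    _ = -((X * (F.c j * F.c j)).trace) := by rw [neg_mul, Matrix.trace_neg, mul_assoc]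
    _ = -X.trace := by rw [F.sq, mul_one]
  linear_combination h1 / 2

lemma trace_pC_zero (l : List (Fin (2*q))) (hl : l.Nodup) (hne : l ≠ []) :
    (pC F l).trace = 0 := by
  obtain ⟨j, hj⟩ : ∃ j, Odd ((l.filter (· ≠ j)).length) := by
    rcases Nat.even_or_odd l.length with he | ho
    · obtain ⟨a, ha⟩ := List.exists_mem_of_ne_nil l hne
      refine ⟨a, ?_⟩
      rw [filter_ne_length a l hl, if_pos ha]
      exact Nat.Even.sub_odd (List.length_pos_iff.mpr hne) he odd_one
    · have hcard : l.toFinset.card = l.length := List.toFinset_card_of_nodup hl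
      have hne2 : l.toFinset ≠ Finset.univ := by
        intro h
        rw [h, Finset.card_univ, Fintype.card_fin] at hcard
        rcases ho with ⟨c, hc⟩; omega
      have : ¬ ∀ x, x ∈ l.toFinset := fun h => hne2 (Finset.eq_univ_iff_forall.mpr h)
      push_neg at this
      obtain ⟨j, hjl⟩ := this
      refine ⟨j, ?_⟩
      rw [filter_ne_length j l hl, if_neg (fun h => hjl (List.mem_toFinset.mpr h))]
      exact ho
  have hac := pC_ac F j l
  rw [Odd.neg_one_pow hj, neg_one_smul] at hac
  exact trace_eq_zero_of_anticomm F j _ hac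

lemma trace_majProd_mul (S T : Finset (Fin (2*q))) :
    ∃ ε : ℂ, (ε = 1 ∨ ε = -1) ∧
      (majProd F S * majProd F T).trace = if S = T then ε * (2^q : ℂ) else 0 := by
  obtain ⟨ε, l₃, hε, hs₃, hfs₃, hmul⟩ :=
    pC_mul F (S.sort (· ≤ ·)) (List.sortedLT_iff_pairwise.mp (Finset.sortedLT_sort S))
      (T.sort (· ≤ ·)) (List.sortedLT_iff_pairwise.mp (Finset.sortedLT_sort T))
  rw [Finset.sort_toFinset, Finset.sort_toFinset] at hfs₃
  refine ⟨ε, hε, ?_⟩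
  rw [majProd_eq_pC, majProd_eq_pC, hmul]
  by_cases hST : S = T
  · subst hST
    rw [symmDiff_self] at hfs₃
    have hl₃ : l₃ = [] := by
      rw [← List.toFinset_eq_empty_iff]; exact hfs₃
    subst hl₃
    rw [if_pos rfl, pC_nil, Matrix.trace_smul, Matrix.trace_one]
    simp [Fintype.card_fin]
  · rw [if_neg hST, Matrix.trace_smul, trace_pC_zero F l₃ hs₃.nodup, smul_zero]
    intro h
    subst h
    rw [List.toFinset_nil] at hfs₃
    exact hST (symmDiff_eq_bot.mp hfs₃.symm)

lemma majProd_linearIndependent :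
    LinearIndependent ℂ (fun S : Finset (Fin (2*q)) => majProd F S) := by
  rw [Fintype.linearIndependent_iff]
  intro g hg T
  have h0 : (majProd F T * (∑ S, g S • majProd F S)).trace = 0 := by
    rw [hg, mul_zero, Matrix.trace_zero]
  rw [Matrix.mul_sum] at h0
  simp only [Matrix.mul_smul, Matrix.trace_sum, Matrix.trace_smul, smul_eq_mul] at h0
  obtain ⟨ε, hε, hT⟩ := trace_majProd_mul F T T
  rw [Finset.sum_eq_single T (fun S _ hST => by
      obtain ⟨ε', _, hTS⟩ := trace_majProd_mul F T S
      rw [hTS, if_neg (fun h => hST h.symm), mul_zero])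
    (fun h => absurd (Finset.mem_univ T) h)] at h0
  rw [hT, if_pos rfl] at h0
  have hε0 : ε ≠ 0 := by rcases hε with h | h <;> simp [h]
  have h2 : (2:ℂ)^q ≠ 0 := by positivity
  rcases mul_eq_zero.mp h0 with h | h
  · exact h
  · rcases mul_eq_zero.mp h with h' | h'
    · exact absurd h' hε0
    · exact absurd h' h2

lemma majProd_span_top :
    Submodule.span ℂ (Set.range (fun S : Finset (Fin (2*q)) => majProd F S)) = ⊤ := by
  apply LinearIndependent.span_eq_top_of_card_eq_finrank (majProd_linearIndependent F)
  rw [Fintype.card_finset, Module.finrank_matrix]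
  simp [Fintype.card_fin, Module.finrank_self, two_mul, pow_add]

lemma pC_full_comm (hq : 1 ≤ q) (L : List (Fin (2*q))) :
    pC F (List.finRange (2*q)) * pC F L
      = ((-1:ℂ)^L.length) • (pC F L * pC F (List.finRange (2*q))) := by
  set P := pC F (List.finRange (2*q)) with hP
  induction L with
  | nil => simp [pC_nil]
  | cons a t ih =>
    have hone : F.c a * P = -(P * F.c a) := by
      have h := pC_ac F a (List.finRange (2*q))
      have hlen : (((List.finRange (2*q)).filter (· ≠ a)).length) = 2*q - 1 := by
        rw [filter_ne_length a _ (List.nodup_finRange _), if_pos (List.mem_finRange a),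
          List.length_finRange]
      rw [hlen, Odd.neg_one_pow ⟨q-1, by omega⟩, neg_one_smul] at h
      exact h
    have hone' : P * F.c a = -(F.c a * P) := by rw [hone, neg_neg]
    calc P * pC F (a :: t) = (P * F.c a) * pC F t := by rw [pC_cons, mul_assoc]
    _ = -(F.c a * (P * pC F t)) := by rw [hone', neg_mul, mul_assoc]
    _ = -(F.c a * (((-1:ℂ)^t.length) • (pC F t * P))) := by rw [ih]
    _ = ((-1:ℂ)^(a::t).length) • ((F.c a * pC F t) * P) := by
        rw [mul_smul_comm, ← neg_smul, mul_assoc, List.length_cons]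
        congr 1
        rw [pow_succ]; ring
    _ = ((-1:ℂ)^(a::t).length) • (pC F (a::t) * P) := by rw [pC_cons]

lemma pC_full_sq :
    pC F (List.finRange (2*q)) * pC F (List.finRange (2*q)) = ((-1:ℂ)^q) • 1 := by
  have h := pC_mul_self F (List.finRange (2*q)) (List.nodup_finRange _)
  rw [List.length_finRange] at h
  rw [h]
  congr 1
  have hexp : 2*q*(2*q-1)/2 = q*(2*q-1) := by
    have h1 : 2*q*(2*q-1) = 2*(q*(2*q-1)) := by ring
    rw [h1, Nat.mul_div_cancel_left _ (by norm_num)]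
  rw [hexp]
  rcases Nat.even_or_odd q with h | h
  · rw [Even.neg_one_pow h, Even.neg_one_pow (h.mul_right _)]
  · have h1 : Odd (2*q-1) := ⟨q-1, by rcases h with ⟨c, hc⟩; omega⟩
    rw [Odd.neg_one_pow h, Odd.neg_one_pow (h.mul h1)]

end AuxStmt18


/-- If `Γ^{k,l} ρ = 0` for all `k ≠ l`, then `ρ̃ = (ρ + C ρ C)/2` also satisfies
`Γ^{k,l} ρ̃ = 0` for all `k ≠ l`, and `ρ̃` is even. -/
theorem stmt_18 (m n : ℕ) (hm : 1 ≤ m) (hn : 2 ≤ n) (E : MajoranaFamily (m*n))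
    (ρ : Matrix (Fin (2^(m*n))) (Fin (2^(m*n))) ℂ)
    (hρ : ∀ k l : Fin n, k ≠ l → GammaKL m n E k l * ρ = 0) :
    (∀ k l : Fin n, k ≠ l →
      GammaKL m n E k l *
        ((1/2 : ℂ) • (ρ + bigParity m n E * ρ * bigParity m n E)) = 0) ∧
    IsEven E ((1/2 : ℂ) • (ρ + bigParity m n E * ρ * bigParity m n E)) := by
  have hq : 1 ≤ m * n := Nat.mul_pos (by omega) (by omega)
  have hCP : bigParity m n E
      = (Complex.I^(m*n)) • pC E (List.finRange (2*(m*n))) := rfl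
  have hClist : ∀ L : List (Fin (2*(m*n))), bigParity m n E * pC E L
      = ((-1:ℂ)^L.length) • (pC E L * bigParity m n E) := by
    intro L
    rw [hCP, smul_mul_assoc, pC_full_comm E hq L, mul_smul_comm, smul_comm]
  have hCsq : bigParity m n E * bigParity m n E = 1 := by
    rw [hCP, smul_mul_assoc, mul_smul_comm, pC_full_sq E, smul_smul, smul_smul]
    have hscal : Complex.I^(m*n) * Complex.I^(m*n) * (-1:ℂ)^(m*n) = 1 := by
      rw [← pow_add, show m*n + m*n = 2*(m*n) by ring,
        pow_mul, Complex.I_sq, ← mul_pow, neg_mul_neg, one_mul, one_pow]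
    rw [hscal, one_smul]
  have hGammaComm : ∀ k l : Fin n,
      GammaKL m n E k l * bigParity m n E = bigParity m n E * GammaKL m n E k l := by
    intro k l
    unfold GammaKL
    rw [Finset.sum_mul, Finset.mul_sum]
    refine Finset.sum_congr rfl (fun j _ => ?_)
    rw [smul_mul_assoc, mul_smul_comm]
    congr 1
    have hQ : E.c (bigIdx m n k j) *
        (((List.finRange (2*m)).filter (fun i => i ≠ j)).map
          (fun i => E.c (bigIdx m n l i))).prod
        = pC E (bigIdx m n k j ::
            ((List.finRange (2*m)).filter (fun i => i ≠ j)).map (bigIdx m n l)) := by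
      rw [pC_cons, pC, List.map_map]
      rfl
    rw [hQ, hClist]
    have hlen : ((bigIdx m n k j) ::
        ((List.finRange (2*m)).filter (fun i => i ≠ j)).map (bigIdx m n l)).length
        = 2*m := by
      rw [List.length_cons, List.length_map,
        filter_ne_length j _ (List.nodup_finRange _), if_pos (List.mem_finRange j),
        List.length_finRange]
      omega
    rw [hlen, Even.neg_one_pow ⟨m, by ring⟩, one_smul]
  constructor
  · intro k l hkl
    rw [mul_smul_comm, mul_add, hρ k l hkl, zero_add, ← mul_assoc, ← mul_assoc,
      hGammaComm k l, mul_assoc (bigParity m n E), hρ k l hkl, mul_zero, zero_mul,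
      smul_zero]
  · have hspan := majProd_span_top E
    have hmem : ρ ∈ Submodule.span ℂ
        (Set.range (fun S : Finset (Fin (2*(m*n))) => majProd E S)) := by
      rw [hspan]; trivial
    obtain ⟨a, ha⟩ := (Submodule.mem_span_range_iff_exists_fun ℂ).mp hmem
    have hCC : ∀ S : Finset (Fin (2*(m*n))),
        bigParity m n E * majProd E S * bigParity m n E
          = ((-1:ℂ)^S.card) • majProd E S := by
      intro S
      rw [majProd_eq_pC, hClist, smul_mul_assoc, mul_assoc, hCsq, mul_one,
        Finset.length_sort]
    have hexp : (1/2:ℂ) • (ρ + bigParity m n E * ρ * bigParity m n E)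
        = ∑ S : Finset (Fin (2*(m*n))),
            ((1/2:ℂ) * (a S + a S * (-1)^S.card)) • majProd E S := by
      rw [← ha, Matrix.mul_sum, Matrix.sum_mul, ← Finset.sum_add_distrib,
        Finset.smul_sum]
      refine Finset.sum_congr rfl (fun S _ => ?_)
      rw [Matrix.mul_smul, Matrix.smul_mul, hCC S, smul_smul, ← add_smul, smul_smul]
    unfold IsEven
    rw [hexp]
    refine Submodule.sum_mem _ (fun S _ => ?_)
    rcases Nat.even_or_odd S.card with hev | hodd
    · exact Submodule.smul_mem _ _ (Submodule.subset_span ⟨S, hev, rfl⟩)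
    · have h0 : (1/2:ℂ) * (a S + a S * (-1)^S.card) = 0 := by
        rw [Odd.neg_one_pow hodd]; ring
      rw [h0, zero_smul]
      exact Submodule.zero_mem _

end
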